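/- Let $p$ be an odd prime, let $w=(w_1,\dots,w_n)\in\mathbb{F}_p^n$, and let $x_1,\dots,x_n$ be i.i.d. Rademacher random variables (uniform on $\{-1,1\}$). Then for every $r\in\mathbb{F}_p$, $\big|\mathbb{P}\big(\sum_{i=1}^n x_i w_i = r\big) - \tfrac{1}{p}\big| \le \frac{1}{p}\sum_{t\in\mathbb{F}_p\setminus\{0\}} \exp\big(-2\sum_{i=1}^n \|t w_i / p\|_{\mathbb{R}/\mathbb{Z}}^2\big)$, where $w_i$ are identified with integer representatives. -/

import Mathlib

open MeasureTheory ProbabilityTheory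

namespace StmtAux9

noncomputable def zet (p : ℕ) : ℂ := Complex.exp ((2 * Real.pi / p : ℝ) * Complex.I)

lemma zet_pow_p {p : ℕ} (hp : p ≠ 0) : zet p ^ p = 1 := by
  rw [zet, ← Complex.exp_nat_mul]
  have hpc : (p : ℂ) ≠ 0 := Nat.cast_ne_zero.mpr hp
  have : (p : ℂ) * ((2 * Real.pi / p : ℝ) * Complex.I) = 2 * Real.pi * Complex.I := by
    push_cast
    field_simp
  rw [this, Complex.exp_two_pi_mul_I]

lemma zet_pow_mod {p : ℕ} (hp : p ≠ 0) (m : ℕ) : zet p ^ m = zet p ^ (m % p) := by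
  conv_lhs => rw [← Nat.mod_add_div m p, pow_add, pow_mul, zet_pow_p hp, one_pow, mul_one]

lemma abs_zet {p : ℕ} : ‖zet p‖ = 1 := Complex.norm_exp_ofReal_mul_I _

lemma zet_ne_one {p : ℕ} (hp : 2 ≤ p) : zet p ≠ 1 := by
  intro h
  rw [zet, Complex.exp_eq_one_iff] at h
  obtain ⟨k, hk⟩ := h
  have hk' : ((2 * Real.pi / p : ℝ) : ℂ) * Complex.I = ((2 * Real.pi * k : ℝ) : ℂ) * Complex.I := by
    rw [hk]; push_cast; ring
  have h3 : (2 * Real.pi / p : ℝ) = 2 * Real.pi * (k : ℝ) := by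
    exact_mod_cast mul_right_cancel₀ Complex.I_ne_zero hk'
  have hπ := Real.pi_pos
  have hppos : (0:ℝ) < p := by positivity
  have h4 : 1 / (p:ℝ) = (k:ℝ) := by
    field_simp at h3 ⊢
    nlinarith
  have h5 : (0:ℝ) < 1 / p := by positivity
  have h6 : 1 / (p:ℝ) < 1 := by
    rw [div_lt_one hppos]; exact_mod_cast hp.trans_lt' one_lt_two
  rw [h4] at h5 h6
  have : (0:ℤ) < k := by exact_mod_cast h5
  have : (k:ℤ) < 1 := by exact_mod_cast h6
  omega


variable {p : ℕ}

noncomputable def ep (p : ℕ) (a : ZMod p) : ℂ := zet p ^ a.val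

lemma ep_zero [NeZero p] : ep p 0 = 1 := by simp [ep, ZMod.val_zero]

lemma ep_add [NeZero p] (a b : ZMod p) : ep p (a + b) = ep p a * ep p b := by
  rw [ep, ep, ep, ← pow_add, ZMod.val_add, ← zet_pow_mod (NeZero.ne p)]

lemma abs_ep (a : ZMod p) : ‖ep p a‖ = 1 := by
  rw [ep, norm_pow, abs_zet, one_pow]

lemma ep_ne_zero (a : ZMod p) : ep p a ≠ 0 := by
  intro h; have := abs_ep a; rw [h] at this; simp at this

lemma ep_mul_neg [NeZero p] (a : ZMod p) : ep p a * ep p (-a) = 1 := by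
  rw [← ep_add, add_neg_cancel, ep_zero]

lemma ep_eq_exp (a : ZMod p) :
    ep p a = Complex.exp ((2 * Real.pi * a.val / p : ℝ) * Complex.I) := by
  rw [ep, zet, ← Complex.exp_nat_mul]
  congr 1
  push_cast
  ring

lemma ep_sum {ι : Type*} (s : Finset ι) [NeZero p] (f : ι → ZMod p) :
    ep p (∑ i ∈ s, f i) = ∏ i ∈ s, ep p (f i) := by
  classical
  induction s using Finset.cons_induction with
  | empty => simp [ep_zero]
  | cons a s ha ih => rw [Finset.sum_cons, Finset.prod_cons, ep_add, ih]

lemma ep_add_neg_eq_cos [NeZero p] (a : ZMod p) :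
    ep p a + ep p (-a) = 2 * (Real.cos (2 * Real.pi * a.val / p) : ℂ) := by
  have h1 := ep_eq_exp (p := p) a
  have h2 : ep p (-a) = Complex.exp (-(((2 * Real.pi * a.val / p : ℝ)) * Complex.I)) := by
    have := ep_mul_neg (p := p) a
    have h3 : ep p (-a) = (ep p a)⁻¹ := by
      field_simp [ep_ne_zero a] at this ⊢
      linear_combination this
    rw [h3, h1, ← Complex.exp_neg]
  rw [h1, h2, ← neg_mul, Complex.ofReal_cos, ← Complex.two_cos]

lemma sum_ep [Fact p.Prime] (a : ZMod p) :
    ∑ t : ZMod p, ep p (t * a) = if a = 0 then (p : ℂ) else 0 := by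
  have hp : p ≠ 0 := NeZero.ne p
  have hp2 : 2 ≤ p := (Fact.out : p.Prime).two_le
  by_cases ha : a = 0
  · simp [ha, ep_zero, Finset.card_univ]
  · rw [if_neg ha]
    have hbij : ∑ t : ZMod p, ep p (t * a) = ∑ s : ZMod p, ep p s :=
      Fintype.sum_equiv (Equiv.mulRight₀ a ha) _ _ (fun t => rfl)
    rw [hbij]
    have hrange : ∑ s : ZMod p, ep p s = ∑ k ∈ Finset.range p, zet p ^ k := by
      refine Finset.sum_nbij' (i := fun s => ZMod.val s) (j := fun k => (k : ZMod p)) ?_ ?_ ?_ ?_ ?_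
      · intro a _; exact Finset.mem_range.mpr (ZMod.val_lt a)
      · intro k _; exact Finset.mem_univ _
      · intro a _; exact ZMod.natCast_rightInverse a
      · intro k hk; exact ZMod.val_cast_of_lt (Finset.mem_range.mp hk)
      · intro a _; rfl
    rw [hrange, geom_sum_eq (zet_ne_one hp2), zet_pow_p hp, sub_self, zero_div]


lemma dist_round_add_int (u : ℝ) (k : ℤ) : |(u + k) - round (u + k)| = |u - round u| := by
  rw [round_add_intCast]
  push_cast
  ring_nf

lemma cos_bound (y : ℝ) : |Real.cos (2 * Real.pi * y)| ≤
    Real.exp (-2 * |2 * y - round (2 * y)| ^ 2) := by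
  set u : ℝ := 2 * y with hu
  set k : ℤ := round u with hk
  set s : ℝ := u - k with hs
  have hs2 : |s| ≤ 1 / 2 := abs_sub_round u
  have hπ := Real.pi_pos
  have h1 : Real.cos (2 * Real.pi * y) = Real.cos ((k : ℝ) * Real.pi + s * Real.pi) := by
    congr 1
    rw [hs]
    ring
  rw [h1, Real.cos_add, Real.sin_int_mul_pi, zero_mul, sub_zero, abs_mul,
    Real.abs_cos_int_mul_pi, one_mul]
  have hsle : |s * Real.pi| ≤ Real.pi / 2 := by
    rw [abs_mul, abs_of_pos hπ]
    nlinarith [abs_nonneg s]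
  have hsle' := abs_le.mp hsle
  have hnonneg : 0 ≤ Real.cos (s * Real.pi) :=
    Real.cos_nonneg_of_mem_Icc ⟨by linarith [hsle'.1], hsle'.2⟩
  rw [_root_.abs_of_nonneg hnonneg]
  have hb : Real.cos (s * Real.pi) ≤ 1 - 2 / Real.pi ^ 2 * (s * Real.pi) ^ 2 :=
    Real.cos_le_one_sub_mul_cos_sq (by nlinarith)
  have heq : 1 - 2 / Real.pi ^ 2 * (s * Real.pi) ^ 2 = 1 + (-2 * s ^ 2) := by
    field_simp
    ring
  have hexp : 1 + (-2 * s ^ 2) ≤ Real.exp (-2 * s ^ 2) := by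
    linarith [Real.add_one_le_exp (-2 * s ^ 2)]
  calc Real.cos (s * Real.pi) ≤ 1 + (-2 * s ^ 2) := by rw [← heq]; exact hb
    _ ≤ Real.exp (-2 * s ^ 2) := hexp
    _ = Real.exp (-2 * |s| ^ 2) := by rw [_root_.sq_abs]

lemma cos_val_bound [NeZero p] (c : ZMod p) :
    |Real.cos (2 * Real.pi * c.val / p)| ≤
      Real.exp (-2 * |(((2 * c : ZMod p)).val : ℝ) / p -
        round ((((2 * c : ZMod p)).val : ℝ) / p)| ^ 2) := by
  have hp : (0:ℝ) < p := by
    have := NeZero.pos p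
    exact_mod_cast this
  have h0 := cos_bound ((c.val : ℝ) / p)
  have h1 : 2 * Real.pi * ((c.val : ℝ) / p) = 2 * Real.pi * c.val / p := by ring
  rw [h1] at h0
  refine h0.trans (le_of_eq ?_)
  congr 2
  have hcast : (2 * c : ZMod p) = ((2 * c.val : ℕ) : ZMod p) := by
    push_cast
    rw [ZMod.natCast_val, ZMod.cast_id]
  have hval : (2 * c : ZMod p).val = (2 * c.val) % p := by
    rw [hcast, ZMod.val_natCast]
  have hp' : (p : ℝ) ≠ 0 := ne_of_gt hp
  have hnat : 2 * c.val = (2 * c : ZMod p).val + p * ((2 * c.val) / p) := by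
    rw [hval]
    exact (Nat.mod_add_div _ _).symm
  have hq : 2 * (c.val : ℝ) = ((2 * c : ZMod p).val : ℝ) + ((2 * c.val) / p : ℕ) * p := by
    exact_mod_cast hnat.trans (by ring)
  have h2 : 2 * ((c.val : ℝ) / p) =
      (((2 * c : ZMod p).val : ℝ)) / p + ((((2 * c.val) / p : ℕ) : ℤ) : ℝ) := by
    calc 2 * ((c.val : ℝ) / p) = (2 * (c.val : ℝ)) / p := by ring
      _ = (((2 * c : ZMod p).val : ℝ) + ((2 * c.val) / p : ℕ) * p) / p := by rw [hq]
      _ = (((2 * c : ZMod p).val : ℝ)) / p + ((((2 * c.val) / p : ℕ) : ℤ) : ℝ) := by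
          rw [add_div, mul_div_cancel_right₀ _ hp']
          rw [Int.cast_natCast]
  rw [h2, dist_round_add_int]


open MeasureTheory ProbabilityTheory

variable {Ω : Type*} [MeasureSpace Ω] [IsProbabilityMeasure (ℙ : Measure Ω)]

lemma integrable_of_bdd {g : Ω → ℂ} (hm : AEStronglyMeasurable g ℙ)
    (hb : ∀ ω, ‖g ω‖ ≤ 1) : Integrable g ℙ :=
  (integrable_const (1:ℝ)).mono' hm (Filter.Eventually.of_forall (fun ω => hb ω))

lemma integral_two_point (X : Ω → ℤ) (hX : Measurable X)
    (h1 : ℙ {ω | X ω = 1} = 1/2) (h2 : ℙ {ω | X ω = -1} = 1/2) (f : ℤ → ℂ) :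
    ∫ ω, f (X ω) ∂ℙ = (f 1 + f (-1)) / 2 := by
  set A : Set Ω := X ⁻¹' {1} with hAdef
  set B : Set Ω := X ⁻¹' {-1} with hBdef
  have hA : MeasurableSet A := hX (measurableSet_singleton 1)
  have hB : MeasurableSet B := hX (measurableSet_singleton (-1))
  have hd : Disjoint A B := by
    rw [Set.disjoint_left]
    intro ω hω1 hω2
    simp only [hAdef, hBdef, Set.mem_preimage, Set.mem_singleton_iff] at hω1 hω2
    omega
  have hPA : ℙ A = 1/2 := h1
  have hPB : ℙ B = 1/2 := h2
  have hAB : ℙ (A ∪ B) = 1 := by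
    rw [measure_union hd hB, hPA, hPB, ENNReal.add_halves]
  have hN : ℙ ((A ∪ B)ᶜ) = 0 := by
    rw [measure_compl (hA.union hB) (measure_ne_top _ _), hAB, measure_univ, tsub_self]
  have hae : (fun ω => f (X ω)) =ᵐ[ℙ] (A ∪ B).indicator (fun ω => f (X ω)) := by
    filter_upwards [MeasureTheory.measure_eq_zero_iff_ae_notMem.mp hN] with ω hω
    rw [Set.indicator_of_mem (Set.notMem_compl_iff.mp hω)]
  have hsplit : (A ∪ B).indicator (fun ω => f (X ω)) =
      A.indicator (fun _ => f 1) + B.indicator (fun _ => f (-1)) := by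
    funext ω
    by_cases hω1 : ω ∈ A
    · have hx : X ω = 1 := hω1
      have hω2 : ω ∉ B := Set.disjoint_left.mp hd hω1
      simp [Set.indicator_of_mem (Set.mem_union_left _ hω1), hx,
        Set.indicator_of_mem hω1, Set.indicator_of_notMem hω2]
    · by_cases hω2 : ω ∈ B
      · have hx : X ω = -1 := hω2
        simp [Set.indicator_of_mem (Set.mem_union_right _ hω2), hx,
          Set.indicator_of_notMem hω1, Set.indicator_of_mem hω2]
      · have : ω ∉ A ∪ B := by simp [hω1, hω2]
        simp [Set.indicator_of_notMem this, Set.indicator_of_notMem hω1,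
          Set.indicator_of_notMem hω2]
  rw [integral_congr_ae hae, hsplit]
  simp only [Pi.add_apply]
  rw [integral_add
    ((integrable_const (f 1)).indicator hA) ((integrable_const (f (-1))).indicator hB),
    integral_indicator_const _ hA, integral_indicator_const _ hB, measureReal_def, measureReal_def, hPA, hPB]
  norm_num [ENNReal.toReal_div]
  ring

lemma indepFun_integral_mul {X Y : Ω → ℂ} (h : IndepFun X Y ℙ)
    (hX : Integrable X ℙ) (hY : Integrable Y ℙ)
    (hXY : Integrable (fun ω => X ω * Y ω) ℙ) :
    ∫ ω, X ω * Y ω ∂ℙ = (∫ ω, X ω ∂ℙ) * ∫ ω, Y ω ∂ℙ := by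
  have hre : Measurable (Complex.re) := Complex.measurable_re
  have him : Measurable (Complex.im) := Complex.measurable_im
  have hXr : Integrable (fun ω => (X ω).re) ℙ := hX.re
  have hXi : Integrable (fun ω => (X ω).im) ℙ := hX.im
  have hYr : Integrable (fun ω => (Y ω).re) ℙ := hY.re
  have hYi : Integrable (fun ω => (Y ω).im) ℙ := hY.im
  have hrr : ∫ ω, (X ω).re * (Y ω).re ∂ℙ = (∫ ω, (X ω).re ∂ℙ) * ∫ ω, (Y ω).re ∂ℙ :=
    (h.comp hre hre).integral_mul_eq_mul_integral hXr.aestronglyMeasurable hYr.aestronglyMeasurable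
  have hri : ∫ ω, (X ω).re * (Y ω).im ∂ℙ = (∫ ω, (X ω).re ∂ℙ) * ∫ ω, (Y ω).im ∂ℙ :=
    (h.comp hre him).integral_mul_eq_mul_integral hXr.aestronglyMeasurable hYi.aestronglyMeasurable
  have hir : ∫ ω, (X ω).im * (Y ω).re ∂ℙ = (∫ ω, (X ω).im ∂ℙ) * ∫ ω, (Y ω).re ∂ℙ :=
    (h.comp him hre).integral_mul_eq_mul_integral hXi.aestronglyMeasurable hYr.aestronglyMeasurable
  have hii : ∫ ω, (X ω).im * (Y ω).im ∂ℙ = (∫ ω, (X ω).im ∂ℙ) * ∫ ω, (Y ω).im ∂ℙ :=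
    (h.comp him him).integral_mul_eq_mul_integral hXi.aestronglyMeasurable hYi.aestronglyMeasurable
  have hXeq := integral_re_add_im (𝕜 := ℂ) hX
  have hYeq := integral_re_add_im (𝕜 := ℂ) hY
  have hXYeq := integral_re_add_im (𝕜 := ℂ) hXY
  simp only [RCLike.re_to_complex, RCLike.im_to_complex, RCLike.I_to_complex] at hXeq hYeq hXYeq
  rw [← hXeq, ← hYeq, ← hXYeq]
  have hre_eq : ∫ ω, (X ω * Y ω).re ∂ℙ =
      (∫ ω, (X ω).re ∂ℙ) * (∫ ω, (Y ω).re ∂ℙ) - (∫ ω, (X ω).im ∂ℙ) * ∫ ω, (Y ω).im ∂ℙ := by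
    have heq : (fun ω => (X ω * Y ω).re) = fun ω => (X ω).re * (Y ω).re - (X ω).im * (Y ω).im := by
      funext ω; exact Complex.mul_re _ _
    have hI1 : Integrable (fun ω => (X ω).re * (Y ω).re) ℙ := by
      exact (h.comp hre hre).integrable_mul hXr hYr
    have hI2 : Integrable (fun ω => (X ω).im * (Y ω).im) ℙ := by
      exact (h.comp him him).integrable_mul hXi hYi
    rw [heq, integral_sub hI1 hI2, hrr, hii]
  have him_eq : ∫ ω, (X ω * Y ω).im ∂ℙ =
      (∫ ω, (X ω).re ∂ℙ) * (∫ ω, (Y ω).im ∂ℙ) + (∫ ω, (X ω).im ∂ℙ) * ∫ ω, (Y ω).re ∂ℙ := by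
    have heq : (fun ω => (X ω * Y ω).im) = fun ω => (X ω).re * (Y ω).im + (X ω).im * (Y ω).re := by
      funext ω; exact Complex.mul_im _ _
    have hI1 : Integrable (fun ω => (X ω).re * (Y ω).im) ℙ := by
      exact (h.comp hre him).integrable_mul hXr hYi
    have hI2 : Integrable (fun ω => (X ω).im * (Y ω).re) ℙ := by
      exact (h.comp him hre).integrable_mul hXi hYr
    rw [heq, integral_add hI1 hI2, hri, hir]
  rw [hre_eq, him_eq]
  push_cast
  ring_nf
  rw [Complex.I_sq]
  ring

lemma integral_finset_prod_indep {n : ℕ} (f : Fin n → Ω → ℂ) (hm : ∀ i, Measurable (f i))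
    (hb : ∀ i ω, ‖f i ω‖ ≤ 1)
    (hind : iIndepFun f ℙ) (s : Finset (Fin n)) :
    ∫ ω, ∏ i ∈ s, f i ω ∂ℙ = ∏ i ∈ s, ∫ ω, f i ω ∂ℙ := by
  classical
  have hmP : ∀ t : Finset (Fin n), Measurable (fun ω => ∏ i ∈ t, f i ω) :=
    fun t => Finset.measurable_prod t (fun i _ => hm i)
  have hbP : ∀ (t : Finset (Fin n)) ω, ‖∏ i ∈ t, f i ω‖ ≤ 1 := by
    intro t ω
    rw [norm_prod]
    exact Finset.prod_le_one (fun i _ => norm_nonneg _) (fun i _ => hb i ω)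
  have hint : ∀ t : Finset (Fin n), Integrable (fun ω => ∏ i ∈ t, f i ω) ℙ :=
    fun t => integrable_of_bdd (hmP t).aestronglyMeasurable (hbP t)
  induction s using Finset.cons_induction with
  | empty => simp
  | cons a s ha ih =>
    have hIF : IndepFun (f a) (fun ω => ∏ i ∈ s, f i ω) ℙ := by
      have := (hind.indepFun_finsetProd_of_notMem hm ha).symm
      have heq : (∏ j ∈ s, f j) = fun ω => ∏ i ∈ s, f i ω := by
        funext ω; rw [Finset.prod_apply]
      rwa [heq] at this
    have hmul : (fun ω => f a ω * ∏ i ∈ s, f i ω) = fun ω => ∏ i ∈ Finset.cons a s ha, f i ω := by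
      funext ω; rw [Finset.prod_cons]
    rw [Finset.prod_cons, ← ih, ← hmul]
    refine indepFun_integral_mul hIF ?_ ?_ ?_
    · exact integrable_of_bdd (hm a).aestronglyMeasurable (hb a)
    · exact hint s
    · rw [hmul]; exact hint _

end StmtAux9

open StmtAux9

/-- Fourier bound: for an odd prime `p`, `w ∈ 𝔽_pⁿ` and i.i.d. Rademacher `x₁,…,xₙ`,
for every `r ∈ 𝔽_p`,
`|P(∑ xᵢwᵢ = r) - 1/p| ≤ (1/p) ∑_{t ≠ 0} exp(-2 ∑ᵢ ‖t wᵢ / p‖²_{ℝ/ℤ})`. -/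
theorem stmt_9 (p : ℕ) [Fact p.Prime] (hodd : p ≠ 2) (n : ℕ)
    (Ω : Type*) [MeasureSpace Ω] [IsProbabilityMeasure (ℙ : Measure Ω)]
    (w : Fin n → ZMod p) (x : Fin n → Ω → ℤ)
    (hmeas : ∀ i, Measurable (x i))
    (hindep : iIndepFun x ℙ)
    (hrad : ∀ i, ℙ {ω | x i ω = 1} = 1 / 2 ∧ ℙ {ω | x i ω = -1} = 1 / 2)
    (r : ZMod p) :
    |(ℙ {ω | ∑ i, (x i ω : ZMod p) * w i = r}).toReal - 1 / p| ≤
      (1 / p) * ∑ t ∈ Finset.univ.filter (fun t : ZMod p => t ≠ 0),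
        Real.exp (-2 * ∑ i, |((t * w i).val : ℝ) / p -
          (round (((t * w i).val : ℝ) / p) : ℝ)| ^ 2) := by
  classical
  have hprime : p.Prime := Fact.out
  have hp : p ≠ 0 := hprime.pos.ne'
  haveI : NeZero p := ⟨hp⟩
  have hppos : (0:ℝ) < p := by exact_mod_cast hprime.pos
  have hpc : (p : ℂ) ≠ 0 := Nat.cast_ne_zero.mpr hp
  have h2 : (2 : ZMod p) ≠ 0 := by
    have : ((2:ℕ) : ZMod p) ≠ 0 := by
      rw [Ne, ZMod.natCast_eq_zero_iff]
      intro hdvd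
      exact hodd ((Nat.prime_dvd_prime_iff_eq hprime Nat.prime_two).mp hdvd)
    simpa using this
  -- the random variable
  set X : Ω → ZMod p := fun ω => ∑ i, (x i ω : ZMod p) * w i with hXdef
  set S : Set Ω := {ω | X ω = r} with hSdef
  -- measurability infrastructure
  have hvec : Measurable (fun ω => (fun i => x i ω) : Ω → (Fin n → ℤ)) :=
    measurable_pi_lambda _ hmeas
  have hcomp : ∀ (φ : (Fin n → ℤ) → ℂ), Measurable (fun ω => φ (fun i => x i ω)) :=
    fun φ => (measurable_of_countable φ).comp hvec
  have hSm : MeasurableSet S := by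
    have : S = (fun ω => (fun i => x i ω)) ⁻¹'
        {v : Fin n → ℤ | ∑ i, ((v i : ZMod p)) * w i = r} := rfl
    rw [this]
    exact hvec ((Set.to_countable _).measurableSet)
  -- the characters
  set g : ZMod p → Ω → ℂ := fun t ω => ep p (t * (X ω - r)) with hgdef
  have hgm : ∀ t, Measurable (g t) := by
    intro t
    exact hcomp (fun v => ep p (t * ((∑ i, ((v i : ZMod p)) * w i) - r)))
  have hgb : ∀ t ω, ‖g t ω‖ ≤ 1 := fun t ω => le_of_eq (abs_ep _)
  have hgint : ∀ t, Integrable (g t) ℙ :=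
    fun t => integrable_of_bdd (hgm t).aestronglyMeasurable (hgb t)
  set F : ZMod p → ℂ := fun t => ∫ ω, g t ω ∂ℙ with hFdef
  -- orthogonality identity
  have hsumF : ∑ t : ZMod p, F t = ((ℙ S).toReal : ℂ) * p := by
    rw [hFdef, ← integral_finset_sum Finset.univ (fun t _ => hgint t)]
    have hind : (fun ω => ∑ t : ZMod p, g t ω) = S.indicator (fun _ => (p : ℂ)) := by
      funext ω
      rw [hgdef]
      simp only
      rw [sum_ep (X ω - r)]
      by_cases hω : ω ∈ S
      · rw [Set.indicator_of_mem hω]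
        have : X ω - r = 0 := by rw [sub_eq_zero]; exact hω
        rw [if_pos this]
      · rw [Set.indicator_of_notMem hω]
        have : ¬ (X ω - r = 0) := by rw [sub_eq_zero]; exact hω
        rw [if_neg this]
    rw [hind, integral_indicator_const _ hSm, Complex.real_smul, measureReal_def]
  have hF0 : F 0 = 1 := by
    have : g 0 = fun _ => (1:ℂ) := by
      funext ω; rw [hgdef]; simp only [zero_mul]; exact ep_zero
    rw [hFdef]
    simp only [this]
    simp
  -- main identity
  have hmain : ((ℙ S).toReal : ℂ) - 1/p = (1/p) * ∑ t ∈ Finset.univ.erase (0 : ZMod p), F t := by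
    have := Finset.sum_erase_add Finset.univ F (Finset.mem_univ (0 : ZMod p))
    rw [hF0, hsumF] at this
    have hs' : ∑ t ∈ Finset.univ.erase (0 : ZMod p), F t = ((ℙ S).toReal : ℂ) * p - 1 := by
      linear_combination this
    rw [hs']
    field_simp
  -- take absolute values
  have habs : |(ℙ S).toReal - 1/p| ≤ (1/p) * ∑ t ∈ Finset.univ.erase (0 : ZMod p),
      ‖F t‖ := by
    have h1 : |(ℙ S).toReal - 1/p| = ‖((ℙ S).toReal : ℂ) - 1/p‖ := by
      rw [show ((ℙ S).toReal : ℂ) - 1/p = (((ℙ S).toReal - 1/p : ℝ) : ℂ) by push_cast; ring,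
        Complex.norm_real, Real.norm_eq_abs]
    rw [h1, hmain, norm_mul]
    have h2 : ‖(1:ℂ)/p‖ = 1/p := by
      rw [norm_div, norm_one, Complex.norm_natCast]
    rw [h2]
    exact mul_le_mul_of_nonneg_left (norm_sum_le _ _) (by positivity)
  -- bound each character sum
  have hbound : ∀ t : ZMod p, t ∈ Finset.univ.erase (0 : ZMod p) →
      ‖F t‖ ≤ Real.exp (-2 * ∑ i, |((2 * (t * w i) : ZMod p).val : ℝ) / p -
        (round (((2 * (t * w i) : ZMod p).val : ℝ) / p) : ℝ)| ^ 2) := by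
    intro t _
    -- split off the constant character ep(-(t r))
    have hsplit : ∀ ω, g t ω = ep p (t * X ω) * ep p (-(t * r)) := by
      intro ω
      rw [hgdef]
      simp only
      rw [← ep_add]
      congr 1
      ring
    have hFt : F t = (∫ ω, ep p (t * X ω) ∂ℙ) * ep p (-(t * r)) := by
      rw [hFdef]
      simp only [hsplit]
      exact integral_mul_const _ _
    have habsFt : ‖F t‖ = ‖∫ ω, ep p (t * X ω) ∂ℙ‖ := by
      rw [hFt, norm_mul, abs_ep, mul_one]
    -- product structure
    set f : Fin n → Ω → ℂ := fun i ω => ep p ((x i ω : ZMod p) * (t * w i)) with hfdef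
    have hprod : ∀ ω, ep p (t * X ω) = ∏ i, f i ω := by
      intro ω
      rw [hXdef]
      simp only
      rw [Finset.mul_sum]
      rw [show ∀ (s : Finset (Fin n)), ∑ i ∈ s, t * ((x i ω : ZMod p) * w i) =
        ∑ i ∈ s, (x i ω : ZMod p) * (t * w i) from fun s => Finset.sum_congr rfl
          (fun i _ => by ring)]
      exact ep_sum Finset.univ _
    have hfm : ∀ i, Measurable (f i) := by
      intro i
      exact (measurable_of_countable (fun z : ℤ => ep p ((z : ZMod p) * (t * w i)))).comp (hmeas i)
    have hfb : ∀ i ω, ‖f i ω‖ ≤ 1 := fun i ω => le_of_eq (abs_ep _)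
    have hfind : iIndepFun f ℙ :=
      hindep.comp (fun i (z : ℤ) => ep p ((z : ZMod p) * (t * w i)))
        (fun i => measurable_of_countable _)
    have hprodint : ∫ ω, ep p (t * X ω) ∂ℙ = ∏ i, ∫ ω, f i ω ∂ℙ := by
      rw [show (fun ω => ep p (t * X ω)) = fun ω => ∏ i, f i ω from funext hprod]
      exact integral_finset_prod_indep f hfm hfb hfind Finset.univ
    -- each factor is a cosine
    have hcos : ∀ i, ∫ ω, f i ω ∂ℙ = (Real.cos (2 * Real.pi * (t * w i).val / p) : ℂ) := by
      intro i
      have := integral_two_point (x i) (hmeas i) (hrad i).1 (hrad i).2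
        (fun z : ℤ => ep p ((z : ZMod p) * (t * w i)))
      rw [hfdef]
      simp only
      rw [this]
      have e1 : (((1:ℤ) : ZMod p)) = 1 := by push_cast; ring
      have e2 : (((-1:ℤ) : ZMod p)) = -1 := by push_cast; ring
      rw [e1, e2, one_mul, neg_one_mul, ep_add_neg_eq_cos]
      ring
    rw [habsFt, hprodint]
    rw [norm_prod]
    calc ∏ i, ‖∫ ω, f i ω ∂ℙ‖
        = ∏ i, |Real.cos (2 * Real.pi * (t * w i).val / p)| := by
          refine Finset.prod_congr rfl (fun i _ => ?_)
          rw [hcos i, Complex.norm_real, Real.norm_eq_abs]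
      _ ≤ ∏ i, Real.exp (-2 * |((2 * (t * w i) : ZMod p).val : ℝ) / p -
            (round (((2 * (t * w i) : ZMod p).val : ℝ) / p) : ℝ)| ^ 2) := by
          refine Finset.prod_le_prod (fun i _ => abs_nonneg _) (fun i _ => ?_)
          exact cos_val_bound (t * w i)
      _ = Real.exp (-2 * ∑ i, |((2 * (t * w i) : ZMod p).val : ℝ) / p -
            (round (((2 * (t * w i) : ZMod p).val : ℝ) / p) : ℝ)| ^ 2) := by
          rw [← Real.exp_sum, Finset.mul_sum]
  -- reindex the sum
  have hreindex : ∑ t ∈ Finset.univ.erase (0 : ZMod p),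
      Real.exp (-2 * ∑ i, |((2 * (t * w i) : ZMod p).val : ℝ) / p -
        (round (((2 * (t * w i) : ZMod p).val : ℝ) / p) : ℝ)| ^ 2) =
      ∑ t ∈ Finset.univ.filter (fun t : ZMod p => t ≠ 0),
        Real.exp (-2 * ∑ i, |((t * w i).val : ℝ) / p -
          (round (((t * w i).val : ℝ) / p) : ℝ)| ^ 2) := by
    rw [Finset.filter_ne']
    refine Finset.sum_nbij' (i := fun t => 2 * t) (j := fun t => (2 : ZMod p)⁻¹ * t)
      ?_ ?_ ?_ ?_ ?_
    · intro a ha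
      rw [Finset.mem_erase] at ha ⊢
      exact ⟨mul_ne_zero h2 ha.1, Finset.mem_univ _⟩
    · intro a ha
      rw [Finset.mem_erase] at ha ⊢
      exact ⟨mul_ne_zero (inv_ne_zero h2) ha.1, Finset.mem_univ _⟩
    · intro a _
      show (2 : ZMod p)⁻¹ * (2 * a) = a
      rw [← mul_assoc, inv_mul_cancel₀ h2, one_mul]
    · intro a _
      show (2 : ZMod p) * ((2 : ZMod p)⁻¹ * a) = a
      rw [← mul_assoc, mul_inv_cancel₀ h2, one_mul]
    · intro a _
      congr 1
      refine congrArg _ (Finset.sum_congr rfl (fun i _ => ?_))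
      rw [mul_assoc]
  -- conclude
  calc |(ℙ S).toReal - 1/p|
      ≤ (1/p) * ∑ t ∈ Finset.univ.erase (0 : ZMod p), ‖F t‖ := habs
    _ ≤ (1/p) * ∑ t ∈ Finset.univ.erase (0 : ZMod p),
        Real.exp (-2 * ∑ i, |((2 * (t * w i) : ZMod p).val : ℝ) / p -
          (round (((2 * (t * w i) : ZMod p).val : ℝ) / p) : ℝ)| ^ 2) := by
        refine mul_le_mul_of_nonneg_left (Finset.sum_le_sum hbound) (by positivity)
    _ = (1/p) * ∑ t ∈ Finset.univ.filter (fun t : ZMod p => t ≠ 0),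
        Real.exp (-2 * ∑ i, |((t * w i).val : ℝ) / p -
          (round (((t * w i).val : ℝ) / p) : ℝ)| ^ 2) := by rw [hreindex]
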